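/- Let H(A, B) be an (ε, δ)-super-regular pair with density d ≥ δ. Suppose 0 ≤ s ≤ ε²|A| and 0 ≤ t ≤ ε²|B|, and S_A = {v₁, …, v_s}, S_B = {u₁, …, u_t} are vertex sets disjoint from A and B respectively, such that deg(v, B) ≥ d|B| for every v ∈ S_A and deg(u, A) ≥ d|A| for every u ∈ S_B. Then the pair H'(A ∪ S_A, B ∪ S_B) is (3ε, δ − ε)-super-regular with density d' = d ± ε. -/

import Mathlib

open Finset
open scoped Classical

variable {V : Type*}

/-- Number of neighbors of `v` inside the finite set `S`. -/
noncomputable def degIn (G : SimpleGraph V) (v : V) (S : Finset V) : ℕ :=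
  (S.filter fun u => G.Adj v u).card

/-- Number of ordered adjacent pairs between `A` and `B`. -/
noncomputable def eCount (G : SimpleGraph V) (A B : Finset V) : ℕ :=
  ((A ×ˢ B).filter fun p => G.Adj p.1 p.2).card

/-- Bipartite density of the pair `(A, B)`. -/
noncomputable def dens (G : SimpleGraph V) (A B : Finset V) : ℝ :=
  (eCount G A B : ℝ) / ((A.card : ℝ) * B.card)

/-- `(A, B)` is an `ε`-regular pair in `G`. -/
def IsRegularPair (G : SimpleGraph V) (ε : ℝ) (A B : Finset V) : Prop :=
  ∀ X ⊆ A, ∀ Y ⊆ B, ε * A.card ≤ X.card → ε * B.card ≤ Y.card →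
    |dens G A B - dens G X Y| ≤ ε

/-- `(A, B)` is an `(ε, δ)`-super-regular pair in `G`. -/
def IsSuperRegularPair (G : SimpleGraph V) (ε δ : ℝ) (A B : Finset V) : Prop :=
  IsRegularPair G ε A B ∧
    (∀ a ∈ A, δ * B.card ≤ (degIn G a B : ℝ)) ∧
    (∀ b ∈ B, δ * A.card ≤ (degIn G b A : ℝ))

lemma eCount_le_card (G : SimpleGraph V) (A B : Finset V) :
    eCount G A B ≤ A.card * B.card := by
  classical
  calc eCount G A B ≤ (A ×ˢ B).card := card_filter_le _ _
  _ = A.card * B.card := card_product _ _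

lemma dens_nonneg (G : SimpleGraph V) (A B : Finset V) : 0 ≤ _root_.dens G A B := by
  unfold _root_.dens; positivity

lemma dens_le_one (G : SimpleGraph V) (A B : Finset V) : _root_.dens G A B ≤ 1 := by
  unfold _root_.dens
  rcases eq_or_lt_of_le (show (0:ℝ) ≤ (A.card:ℝ) * B.card by positivity) with h | h
  · rw [← h]; simp
  · rw [div_le_one h]
    exact_mod_cast eCount_le_card G A B

lemma eCount_mono (G : SimpleGraph V) {A B A' B' : Finset V} (hA : A ⊆ A') (hB : B ⊆ B') :
    eCount G A B ≤ eCount G A' B' := by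
  classical
  exact card_le_card (filter_subset_filter _ (product_subset_product hA hB))

lemma eCount_upper (G : SimpleGraph V) (A B A' B' : Finset V) :
    eCount G A' B' ≤ eCount G A B + (A' \ A).card * B'.card + A.card * (B' \ B).card := by
  classical
  have hsub : (A' ×ˢ B').filter (fun p => G.Adj p.1 p.2) ⊆
      (((A ×ˢ B).filter (fun p => G.Adj p.1 p.2)) ∪ ((A' \ A) ×ˢ B')) ∪ (A ×ˢ (B' \ B)) := by
    intro p hp
    simp only [mem_filter, mem_product, mem_union, mem_sdiff] at *
    obtain ⟨⟨h1, h2⟩, h3⟩ := hp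
    by_cases hpA : p.1 ∈ A
    · by_cases hpB : p.2 ∈ B
      · exact Or.inl (Or.inl ⟨⟨hpA, hpB⟩, h3⟩)
      · exact Or.inr ⟨hpA, h2, hpB⟩
    · exact Or.inl (Or.inr ⟨⟨h1, hpA⟩, h2⟩)
  have h1 := card_le_card hsub
  have h2 := card_union_le (((A ×ˢ B).filter (fun p => G.Adj p.1 p.2)) ∪ ((A' \ A) ×ˢ B'))
      (A ×ˢ (B' \ B))
  have h3 := card_union_le ((A ×ˢ B).filter (fun p => G.Adj p.1 p.2)) ((A' \ A) ×ˢ B')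
  have h4 : ((A' \ A) ×ˢ B').card = (A' \ A).card * B'.card := card_product _ _
  have h5 : (A ×ˢ (B' \ B)).card = A.card * (B' \ B).card := card_product _ _
  unfold eCount
  omega

/-- Key comparison lemma. -/
lemma dens_close (G : SimpleGraph V) {A B A' B' : Finset V} (hA : A ⊆ A') (hB : B ⊆ B')
    (hA0 : 0 < A.card) (hB0 : 0 < B.card) :
    |_root_.dens G A' B' - _root_.dens G A B| ≤
      ((A'.card : ℝ) - A.card) / A'.card + ((B'.card : ℝ) - B.card) / B'.card := by
  classical
  have haa : A.card ≤ A'.card := card_le_card hA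
  have hbb : B.card ≤ B'.card := card_le_card hB
  have ha : (0:ℝ) < (A.card : ℝ) := by exact_mod_cast hA0
  have hb : (0:ℝ) < (B.card : ℝ) := by exact_mod_cast hB0
  have ha' : (A.card : ℝ) ≤ (A'.card : ℝ) := by exact_mod_cast haa
  have hb' : (B.card : ℝ) ≤ (B'.card : ℝ) := by exact_mod_cast hbb
  set a : ℝ := (A.card : ℝ)
  set b : ℝ := (B.card : ℝ)
  set a' : ℝ := (A'.card : ℝ)
  set b' : ℝ := (B'.card : ℝ)
  have ha'0 : (0:ℝ) < a' := lt_of_lt_of_le ha ha'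
  have hb'0 : (0:ℝ) < b' := lt_of_lt_of_le hb hb'
  have hcA : ((A' \ A).card : ℝ) = a' - a := by
    rw [card_sdiff_of_subset hA]; push_cast [Nat.cast_sub haa]; ring
  have hcB : ((B' \ B).card : ℝ) = b' - b := by
    rw [card_sdiff_of_subset hB]; push_cast [Nat.cast_sub hbb]; ring
  have hmono : (eCount G A B : ℝ) ≤ (eCount G A' B' : ℝ) := by
    exact_mod_cast eCount_mono G hA hB
  have hupper : (eCount G A' B' : ℝ) ≤ (eCount G A B : ℝ) + (a' - a) * b' + a * (b' - b) := by
    have h := (Nat.cast_le (α := ℝ)).2 (eCount_upper G A B A' B')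
    push_cast at h
    rw [hcA, hcB] at h
    linarith
  set u : ℝ := _root_.dens G A B with hu_def
  set v : ℝ := _root_.dens G A' B' with hv_def
  have hu : u * (a * b) = (eCount G A B : ℝ) := by
    rw [hu_def]; unfold _root_.dens
    exact div_mul_cancel₀ _ (mul_pos ha hb).ne'
  have hv : v * (a' * b') = (eCount G A' B' : ℝ) := by
    rw [hv_def]; unfold _root_.dens
    exact div_mul_cancel₀ _ (mul_pos ha'0 hb'0).ne'
  have hu0 : 0 ≤ u := dens_nonneg G A B
  have hu1 : u ≤ 1 := dens_le_one G A B
  have hv0 : 0 ≤ v := dens_nonneg G A' B'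
  set p : ℝ := (a' - a) / a' with hp_def
  set q : ℝ := (b' - b) / b' with hq_def
  have hp : p * a' = a' - a := div_mul_cancel₀ _ (ne_of_gt ha'0)
  have hq : q * b' = b' - b := div_mul_cancel₀ _ (ne_of_gt hb'0)
  have hq0 : 0 ≤ q * b' := by rw [hq]; linarith
  have habab : a * b ≤ a' * b' := mul_le_mul ha' hb' hb.le ha'0.le
  have hab'0 : (0:ℝ) < a' * b' := by positivity
  have f2 : a' * b' - a * b = p * (a' * b') + a * (q * b') := by
    have e1 : p * (a' * b') = (p * a') * b' := by ring
    rw [e1, hp, hq]; ring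
  have f3 : a * (q * b') ≤ a' * (q * b') := mul_le_mul_of_nonneg_right ha' hq0
  have f4 : a' * (q * b') = q * (a' * b') := by ring
  rw [abs_le]
  constructor
  · have f1 : u * (a' * b') - u * (a * b) ≤ a' * b' - a * b := by
      linarith [mul_nonneg (sub_nonneg.2 hu1) (sub_nonneg.2 habab)]
    have key : u * (a' * b') ≤ (v + p + q) * (a' * b') := by
      have hexp : (v + p + q) * (a' * b') = v * (a' * b') + p * (a' * b') + q * (a' * b') := by
        ring
      rw [hexp]
      linarith [hu, hv, hmono]
    have := le_of_mul_le_mul_right key hab'0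
    linarith
  · have g1 : u * (a * b) ≤ u * (a' * b') := by
      linarith [mul_nonneg hu0 (sub_nonneg.2 habab)]
    have key : v * (a' * b') ≤ (u + p + q) * (a' * b') := by
      have hexp : (u + p + q) * (a' * b') = u * (a' * b') + p * (a' * b') + q * (a' * b') := by
        ring
      rw [hexp]
      linarith [hv, hu, hupper, f2]
    have := le_of_mul_le_mul_right key hab'0
    linarith

lemma degIn_mono (G : SimpleGraph V) (v : V) {S S' : Finset V} (h : S ⊆ S') :
    degIn G v S ≤ degIn G v S' := by
  classical
  exact card_le_card (filter_subset_filter _ h)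

lemma div_bound1 {s a ε : ℝ} (hε : 0 < ε) (ha : 0 < a) (hs0 : 0 ≤ s) (hs : s ≤ ε ^ 2 * a) :
    s / (a + s) ≤ ε ^ 2 / (1 + ε ^ 2) := by
  rw [div_le_div_iff₀ (by linarith) (by positivity)]
  nlinarith [hs]

set_option maxHeartbeats 4000000 in
/-- Inserting a few high-degree vertices into a super-regular pair. -/
theorem stmt2 (G : SimpleGraph V) (ε δ d : ℝ) (hε0 : 0 < ε) (hε1 : ε < 1) (hδ : 0 < δ)
    (A B S_A S_B : Finset V)
    (hsr : IsSuperRegularPair G ε δ A B)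
    (hd : dens G A B = d) (hδd : δ ≤ d)
    (hdisjA : Disjoint S_A A) (hdisjB : Disjoint S_B B)
    (hs : (S_A.card : ℝ) ≤ ε ^ 2 * A.card) (ht : (S_B.card : ℝ) ≤ ε ^ 2 * B.card)
    (hdegA : ∀ v ∈ S_A, d * B.card ≤ (degIn G v B : ℝ))
    (hdegB : ∀ u ∈ S_B, d * A.card ≤ (degIn G u A : ℝ)) :
    IsSuperRegularPair G (3 * ε) (δ - ε) (A ∪ S_A) (B ∪ S_B) ∧
    |dens G (A ∪ S_A) (B ∪ S_B) - d| ≤ ε := by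
  classical
  -- nonemptiness
  have hA0 : 0 < A.card := by
    rcases Nat.eq_zero_or_pos A.card with h | h
    · exfalso
      have h0 : _root_.dens G A B = 0 := by
        unfold _root_.dens; rw [h]; simp
      rw [hd] at h0; linarith
    · exact h
  have hB0 : 0 < B.card := by
    rcases Nat.eq_zero_or_pos B.card with h | h
    · exfalso
      have h0 : _root_.dens G A B = 0 := by
        unfold _root_.dens; rw [h]; simp
      rw [hd] at h0; linarith
    · exact h
  have ha : (0:ℝ) < (A.card : ℝ) := by exact_mod_cast hA0
  have hb : (0:ℝ) < (B.card : ℝ) := by exact_mod_cast hB0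
  have hd0 : 0 ≤ d := hd ▸ dens_nonneg G A B
  have hd1 : d ≤ 1 := hd ▸ dens_le_one G A B
  have hs0 : (0:ℝ) ≤ (S_A.card : ℝ) := by positivity
  have ht0 : (0:ℝ) ≤ (S_B.card : ℝ) := by positivity
  have hA'card : ((A ∪ S_A).card : ℝ) = (A.card : ℝ) + S_A.card := by
    rw [card_union_of_disjoint hdisjA.symm]; push_cast; ring
  have hB'card : ((B ∪ S_B).card : ℝ) = (B.card : ℝ) + S_B.card := by
    rw [card_union_of_disjoint hdisjB.symm]; push_cast; ring
  -- density estimate for the big pair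
  have hdens : |_root_.dens G (A ∪ S_A) (B ∪ S_B) - d| ≤ ε := by
    have hkey := dens_close G (subset_union_left (s₂ := S_A)) (subset_union_left (s₂ := S_B))
      hA0 hB0
    rw [hd] at hkey
    have e1 : (((A ∪ S_A).card : ℝ) - A.card) / ((A ∪ S_A).card : ℝ)
        = (S_A.card : ℝ) / ((A.card : ℝ) + S_A.card) := by rw [hA'card]; ring_nf
    have e2 : (((B ∪ S_B).card : ℝ) - B.card) / ((B ∪ S_B).card : ℝ)
        = (S_B.card : ℝ) / ((B.card : ℝ) + S_B.card) := by rw [hB'card]; ring_nf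
    rw [e1, e2] at hkey
    have b1 := div_bound1 hε0 ha hs0 hs
    have b2 := div_bound1 hε0 hb ht0 ht
    have b3 : ε ^ 2 / (1 + ε ^ 2) + ε ^ 2 / (1 + ε ^ 2) ≤ ε := by
      rw [← add_div, div_le_iff₀ (by positivity)]
      linarith [mul_nonneg hε0.le (sq_nonneg (1 - ε))]
    linarith [hkey, b1, b2, b3]
  refine ⟨⟨?_, ?_, ?_⟩, hdens⟩
  · -- regularity
    intro X hX Y hY hXc hYc
    have hX0A : X ∩ A ⊆ A := inter_subset_right
    have hY0B : Y ∩ B ⊆ B := inter_subset_right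
    have hX0X : X ∩ A ⊆ X := inter_subset_left
    have hY0Y : Y ∩ B ⊆ Y := inter_subset_left
    have hXsplit := card_inter_add_card_sdiff X A
    have hYsplit := card_inter_add_card_sdiff Y B
    have hXd : X \ A ⊆ S_A := by
      intro x hx
      rw [mem_sdiff] at hx
      rcases mem_union.1 (hX hx.1) with h | h
      · exact absurd h hx.2
      · exact h
    have hYd : Y \ B ⊆ S_B := by
      intro y hy
      rw [mem_sdiff] at hy
      rcases mem_union.1 (hY hy.1) with h | h
      · exact absurd h hy.2
      · exact h
    have hXdc : ((X \ A).card : ℝ) ≤ (S_A.card : ℝ) := by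
      exact_mod_cast card_le_card hXd
    have hYdc : ((Y \ B).card : ℝ) ≤ (S_B.card : ℝ) := by
      exact_mod_cast card_le_card hYd
    have hXsplit' : ((X ∩ A).card : ℝ) + ((X \ A).card : ℝ) = (X.card : ℝ) := by
      exact_mod_cast hXsplit
    have hYsplit' : ((Y ∩ B).card : ℝ) + ((Y \ B).card : ℝ) = (Y.card : ℝ) := by
      exact_mod_cast hYsplit
    rw [hA'card] at hXc
    rw [hB'card] at hYc
    -- lower bounds on |X|, |X∩A|
    have hεa : (0:ℝ) < ε * A.card := mul_pos hε0 ha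
    have hεb : (0:ℝ) < ε * B.card := mul_pos hε0 hb
    have hεs : (0:ℝ) ≤ ε * S_A.card := mul_nonneg hε0.le hs0
    have hεt : (0:ℝ) ≤ ε * S_B.card := mul_nonneg hε0.le ht0
    have h1ε : (0:ℝ) ≤ 1 - ε := by linarith
    have hεa1 : (0:ℝ) ≤ ε * A.card * (1 - ε) := mul_nonneg hεa.le h1ε
    have hεb1 : (0:ℝ) ≤ ε * B.card * (1 - ε) := mul_nonneg hεb.le h1ε
    have hXbig : 3 * ε * (A.card : ℝ) ≤ (X.card : ℝ) := by linarith [hεs, hXc]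
    have hYbig : 3 * ε * (B.card : ℝ) ≤ (Y.card : ℝ) := by linarith [hεt, hYc]
    have hX0big : 2 * ε * (A.card : ℝ) ≤ ((X ∩ A).card : ℝ) := by
      linarith [hεa1, hXbig, hXsplit', hXdc, hs, hεs]
    have hY0big : 2 * ε * (B.card : ℝ) ≤ ((Y ∩ B).card : ℝ) := by
      linarith [hεb1, hYbig, hYsplit', hYdc, ht, hεt]
    have hX0pos : 0 < (X ∩ A).card := by
      have : (0:ℝ) < ((X ∩ A).card : ℝ) := by linarith
      exact_mod_cast this
    have hY0pos : 0 < (Y ∩ B).card := by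
      have : (0:ℝ) < ((Y ∩ B).card : ℝ) := by linarith
      exact_mod_cast this
    have hXpos : (0:ℝ) < (X.card : ℝ) := by linarith
    have hYpos : (0:ℝ) < (Y.card : ℝ) := by linarith
    -- regularity of original pair
    have hreg := hsr.1 (X ∩ A) hX0A (Y ∩ B) hY0B (by linarith) (by linarith)
    rw [hd] at hreg
    -- compare X,Y with X∩A, Y∩B
    have hcl := dens_close G hX0X hY0Y hX0pos hY0pos
    have r1 : ((X.card : ℝ) - (X ∩ A).card) / (X.card : ℝ) ≤ ε / 3 := by
      rw [div_le_iff₀ hXpos]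
      linarith [mul_le_mul_of_nonneg_left hXbig hε0.le, hXsplit', hXdc, hs]
    have r2 : ((Y.card : ℝ) - (Y ∩ B).card) / (Y.card : ℝ) ≤ ε / 3 := by
      rw [div_le_iff₀ hYpos]
      linarith [mul_le_mul_of_nonneg_left hYbig hε0.le, hYsplit', hYdc, ht]
    have hcl' : |_root_.dens G X Y - _root_.dens G (X ∩ A) (Y ∩ B)| ≤ 2 * ε / 3 := by
      calc |_root_.dens G X Y - _root_.dens G (X ∩ A) (Y ∩ B)| ≤ _ := hcl
        _ ≤ 2 * ε / 3 := by linarith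
    have t1 := abs_le.1 hdens
    have t2 := abs_le.1 hreg
    have t3 := abs_le.1 hcl'
    rw [abs_le]
    constructor <;> [skip; skip] <;> linarith [t1.1, t1.2, t2.1, t2.2, t3.1, t3.2]
  · -- min degree on A side
    intro v hv
    have hδ1 : δ ≤ 1 := le_trans hδd hd1
    have hmono : (degIn G v B : ℝ) ≤ (degIn G v (B ∪ S_B) : ℝ) := by
      exact_mod_cast degIn_mono G v subset_union_left
    have hdegB' : δ * (B.card : ℝ) ≤ (degIn G v B : ℝ) := by
      rcases mem_union.1 hv with h | h
      · exact hsr.2.1 v h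
      · calc δ * (B.card : ℝ) ≤ d * (B.card : ℝ) :=
            mul_le_mul_of_nonneg_right hδd hb.le
          _ ≤ _ := hdegA v h
    rw [hB'card]
    linarith [mul_nonneg hε0.le ht0, mul_le_mul_of_nonneg_right hδ1 ht0,
      mul_nonneg (mul_nonneg hε0.le hb.le) (show (0:ℝ) ≤ 1 - ε by linarith), ht, hmono, hdegB']
  · -- min degree on B side
    intro u hu
    have hδ1 : δ ≤ 1 := le_trans hδd hd1
    have hmono : (degIn G u A : ℝ) ≤ (degIn G u (A ∪ S_A) : ℝ) := by
      exact_mod_cast degIn_mono G u subset_union_left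
    have hdegA' : δ * (A.card : ℝ) ≤ (degIn G u A : ℝ) := by
      rcases mem_union.1 hu with h | h
      · exact hsr.2.2 u h
      · calc δ * (A.card : ℝ) ≤ d * (A.card : ℝ) :=
            mul_le_mul_of_nonneg_right hδd ha.le
          _ ≤ _ := hdegB u h
    rw [hA'card]
    linarith [mul_nonneg hε0.le hs0, mul_le_mul_of_nonneg_right hδ1 hs0,
      mul_nonneg (mul_nonneg hε0.le ha.le) (show (0:ℝ) ≤ 1 - ε by linarith), hs, hmono, hdegA']
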